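/- In the empirical node setting, if a node is pure, i.e., all n_w samples in the node have the same class c₀ with 0 < n_w ≤ N^{c₀} < N, then I(Y; S_w) ≥ (n_w/N) · log(N/N^{c₀}) > 0. -/

import Mathlib

open Finset

lemma gibbs_aux (x y : ℝ) (hx : 0 ≤ x) (hy : 0 < y) : x - y ≤ x * Real.log (x / y) := by
  rcases eq_or_lt_of_le hx with h | h
  · simp [← h]; linarith
  · have h1 : Real.log (y / x) ≤ y / x - 1 := Real.log_le_sub_one_of_pos (by positivity)
    have h2 : Real.log (x / y) = - Real.log (y / x) := by
      rw [← Real.log_inv, inv_div]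
    rw [h2]
    have := mul_le_mul_of_nonneg_left h1 h.le
    have hxy : x * (y / x) = y := by field_simp
    nlinarith


/-- Mutual information of a joint (finite) distribution. -/
noncomputable def mutualInfo {C B : Type*} [Fintype C] [Fintype B] (p : C → B → ℝ) : ℝ :=
  ∑ c, ∑ s, p c s * Real.log (p c s / ((∑ s', p c s') * (∑ c', p c' s)))

/-- If a node is pure — all `n_w` samples in it have the same class `c₀`, with
`0 < n_w ≤ N^{c₀} < N` — then `I(Y; S_w) ≥ (n_w/N) · log(N/N^{c₀}) > 0`. -/
theorem stmt6 {C : Type*} [Fintype C]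
    (N : ℕ) (Ncnt : C → ℕ) (ncnt : C → ℕ) (nw : ℕ) (c₀ : C)
    (hN : ∑ c, Ncnt c = N)
    (hnw : ∑ c, ncnt c = nw)
    (hle : ∀ c, ncnt c ≤ Ncnt c)
    (hpure₀ : ncnt c₀ = nw) (hpure : ∀ c, c ≠ c₀ → ncnt c = 0)
    (hpos : 0 < nw) (hle₀ : nw ≤ Ncnt c₀) (hlt₀ : Ncnt c₀ < N) :
    ((nw : ℝ) / N) * Real.log ((N : ℝ) / (Ncnt c₀ : ℝ)) ≤
        mutualInfo (fun (c : C) (s : Bool) =>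
          if s then (ncnt c : ℝ) / N else ((Ncnt c - ncnt c : ℕ) : ℝ) / N) ∧
      0 < ((nw : ℝ) / N) * Real.log ((N : ℝ) / (Ncnt c₀ : ℝ)) := by
  have hNpos : 0 < N := lt_of_le_of_lt (Nat.zero_le _) hlt₀
  have hNR : (0:ℝ) < N := by exact_mod_cast hNpos
  have hc₀R : (0:ℝ) < (Ncnt c₀ : ℝ) := by
    exact_mod_cast lt_of_lt_of_le hpos hle₀
  have hnwN : nw ≤ N := le_trans hle₀ hlt₀.le
  -- positivity part
  have hposT : 0 < ((nw : ℝ) / N) * Real.log ((N : ℝ) / (Ncnt c₀ : ℝ)) := by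
    apply mul_pos
    · positivity
    · apply Real.log_pos
      rw [lt_div_iff₀ hc₀R]
      simpa using (show (Ncnt c₀ : ℝ) < N by exact_mod_cast hlt₀)
  refine ⟨?_, hposT⟩
  -- column sums
  have hA : ∑ c', ((ncnt c' : ℝ) / N) = (nw : ℝ) / N := by
    rw [← Finset.sum_div, ← Nat.cast_sum, hnw]
  have hB : ∑ c', (((Ncnt c' - ncnt c' : ℕ) : ℝ) / N) = ((N : ℝ) - nw) / N := by
    rw [← Finset.sum_div, ← Nat.cast_sum]
    congr 1
    have : ∑ c', (Ncnt c' - ncnt c') = N - nw := by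
      rw [Finset.sum_tsub_distrib, hN, hnw]
      · intro i _; exact hle i
    rw [this, Nat.cast_sub hnwN]
  -- expand mutualInfo
  rw [mutualInfo]
  have hexp : ∀ c : C, ∑ s : Bool,
      (if s then (ncnt c : ℝ) / N else ((Ncnt c - ncnt c : ℕ) : ℝ) / N) *
        Real.log ((if s then (ncnt c : ℝ) / N else ((Ncnt c - ncnt c : ℕ) : ℝ) / N) /
          ((∑ s' : Bool, (if s' then (ncnt c : ℝ) / N else ((Ncnt c - ncnt c : ℕ) : ℝ) / N)) *
            (∑ c', (if s then (ncnt c' : ℝ) / N else ((Ncnt c' - ncnt c' : ℕ) : ℝ) / N)))) =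
      ((ncnt c : ℝ) / N) * Real.log (((ncnt c : ℝ) / N) /
          ((((ncnt c : ℝ) / N) + (((Ncnt c - ncnt c : ℕ) : ℝ) / N)) * ((nw : ℝ) / N)))
      + (((Ncnt c - ncnt c : ℕ) : ℝ) / N) * Real.log ((((Ncnt c - ncnt c : ℕ) : ℝ) / N) /
          ((((ncnt c : ℝ) / N) + (((Ncnt c - ncnt c : ℕ) : ℝ) / N)) * (((N : ℝ) - nw) / N))) := by
    intro c
    rw [Fintype.sum_bool, Fintype.sum_bool]
    simp only [if_pos rfl, if_neg Bool.false_ne_true, eq_self_iff_true, if_true, hA, hB]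
  simp only [hexp]
  rw [Finset.sum_add_distrib]
  -- first sum equals target
  have h1 : ∑ c, ((ncnt c : ℝ) / N) * Real.log (((ncnt c : ℝ) / N) /
          ((((ncnt c : ℝ) / N) + (((Ncnt c - ncnt c : ℕ) : ℝ) / N)) * ((nw : ℝ) / N)))
      = ((nw : ℝ) / N) * Real.log ((N : ℝ) / (Ncnt c₀ : ℝ)) := by
    rw [Finset.sum_eq_single c₀]
    · rw [hpure₀]
      congr 2
      have hsub : (((Ncnt c₀ - nw : ℕ) : ℝ)) = (Ncnt c₀ : ℝ) - nw := by
        rw [Nat.cast_sub hle₀]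
      rw [hsub]
      have hnwR : (0:ℝ) < (nw:ℝ) := by exact_mod_cast hpos
      field_simp
      ring_nf
      exact mul_inv_cancel₀ hc₀R.ne'
    · intro b _ hb
      rw [hpure b hb]
      simp
    · intro h; exact absurd (Finset.mem_univ c₀) h
  rw [h1]
  -- second sum nonneg
  have h2 : 0 ≤ ∑ c, (((Ncnt c - ncnt c : ℕ) : ℝ) / N) * Real.log ((((Ncnt c - ncnt c : ℕ) : ℝ) / N) /
          ((((ncnt c : ℝ) / N) + (((Ncnt c - ncnt c : ℕ) : ℝ) / N)) * (((N : ℝ) - nw) / N))) := by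
    have ht : (0:ℝ) < ((N : ℝ) - nw) / N := by
      have : (nw : ℝ) < N := by
        exact_mod_cast lt_of_le_of_lt hle₀ hlt₀
      have : (0:ℝ) < (N:ℝ) - nw := by linarith
      positivity
    have key : ∀ c : C,
        (((Ncnt c - ncnt c : ℕ) : ℝ) / N) - ((Ncnt c : ℝ) / N) * (((N : ℝ) - nw) / N) ≤
        (((Ncnt c - ncnt c : ℕ) : ℝ) / N) * Real.log ((((Ncnt c - ncnt c : ℕ) : ℝ) / N) /
          ((((ncnt c : ℝ) / N) + (((Ncnt c - ncnt c : ℕ) : ℝ) / N)) * (((N : ℝ) - nw) / N))) := by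
      intro c
      have hrow : ((ncnt c : ℝ) / N) + (((Ncnt c - ncnt c : ℕ) : ℝ) / N) = (Ncnt c : ℝ) / N := by
        rw [Nat.cast_sub (hle c)]; ring
      rw [hrow]
      rcases Nat.eq_zero_or_pos (Ncnt c) with h0 | h0
      · have : ncnt c = 0 := Nat.le_antisymm (h0 ▸ hle c) (Nat.zero_le _)
        simp [h0, this]
      · have hr : (0:ℝ) < (Ncnt c : ℝ) / N := by
          have : (0:ℝ) < (Ncnt c : ℝ) := by exact_mod_cast h0
          positivity
        exact gibbs_aux _ _ (by positivity) (mul_pos hr ht)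
    calc (0:ℝ) = ∑ c, ((((Ncnt c - ncnt c : ℕ) : ℝ) / N) - ((Ncnt c : ℝ) / N) * (((N : ℝ) - nw) / N)) := by
          rw [Finset.sum_sub_distrib, hB, ← Finset.sum_mul, ← Finset.sum_div, ← Nat.cast_sum, hN]
          field_simp
          ring
      _ ≤ _ := Finset.sum_le_sum (fun c _ => key c)
  linarith
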